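/- In the ring R_{n+1} (the quotient of Z[(Z/d)^{n+1}] by the relations Σ_{k=0}^{d-1} u_ν^k = 0 for each ν), with v_n = u_1⋯u_n and v = v_n·u_{n+1}, one has the identity Σ_{k=0}^{d-1} v^k = (1 − v_n) · Σ_{0≤k≤l≤d−2} u_{n+1}^k v_n^l. -/

import Mathlib

set_option maxHeartbeats 1000000

open MonoidAlgebra Finset

/-- The generator `u_ν` of the integral group ring of `(ℤ/d)^m`. -/
noncomputable def uGen (d m : ℕ) (ν : Fin m) :
    MonoidAlgebra ℤ (Multiplicative (Fin m → ZMod d)) :=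
  MonoidAlgebra.of ℤ (Multiplicative (Fin m → ZMod d))
    (Multiplicative.ofAdd (Pi.single ν 1))

/-- The ideal generated by the elements `∑_{k<d} u_ν^k`, `ν = 1, …, m`. -/
noncomputable def relId (d m : ℕ) :
    Ideal (MonoidAlgebra ℤ (Multiplicative (Fin m → ZMod d))) :=
  Ideal.span {x | ∃ ν : Fin m, x = ∑ k ∈ Finset.range d, uGen d m ν ^ k}

/-- The ring `R_m = ℤ[(ℤ/d)^m]/(∑_{k<d} u_ν^k : ν = 1,…,m)`. -/
abbrev R (d m : ℕ) := MonoidAlgebra ℤ (Multiplicative (Fin m → ZMod d)) ⧸ relId d m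

/-- The image of `u_ν` in `R_m`. -/
noncomputable def uR (d m : ℕ) (ν : Fin m) : R d m :=
  Ideal.Quotient.mk (relId d m) (uGen d m ν)

/-- `v_n = u_1 ⋯ u_n`, viewed inside `R_{n+1}` (the product of the first `n` generators). -/
noncomputable def vR (d n : ℕ) : R d (n + 1) :=
  ∏ ν : Fin n, uR d (n + 1) ν.castSucc

/-- in `R_{n+1}`, with `v_n = u_1⋯u_n` and `v = v_n u_{n+1}`, one has
`∑_{k<d} v^k = (1 - v_n) ∑_{0 ≤ k ≤ l ≤ d-2} u_{n+1}^k v_n^l`. -/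
theorem stmt1 (d n : ℕ) (hd : 3 ≤ d) (hn : 1 ≤ n) :
    ∑ k ∈ Finset.range d, (vR d n * uR d (n + 1) (Fin.last n)) ^ k =
      (1 - vR d n) *
        ∑ l ∈ Finset.range (d - 1), ∑ k ∈ Finset.range (l + 1),
          uR d (n + 1) (Fin.last n) ^ k * vR d n ^ l := by
  set u := uR d (n + 1) (Fin.last n) with hu_def
  set w := vR d n with hw_def
  have hu : ∑ k ∈ Finset.range d, u ^ k = 0 := by
    have hmem : (∑ k ∈ Finset.range d, uGen d (n + 1) (Fin.last n) ^ k) ∈ relId d (n + 1) :=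
      Ideal.subset_span ⟨Fin.last n, rfl⟩
    have := (Ideal.Quotient.eq_zero_iff_mem).2 hmem
    rw [hu_def]; simpa [uR, map_sum, map_pow] using this
  have hd1 : d - 1 + 1 = d := by omega
  calc ∑ k ∈ Finset.range d, (w * u) ^ k
      = ∑ k ∈ Finset.range d, u ^ k * w ^ k := by
        simp [mul_pow, mul_comm]
    _ = (∑ l ∈ Finset.range (d - 1 + 1), u ^ l * w ^ l) -
        (∑ k ∈ Finset.range (d - 1 + 1), u ^ k) * w ^ (d - 1) := by
        rw [hd1, hu]; ring
    _ = (1 - w) * ∑ l ∈ Finset.range (d - 1),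
          (∑ k ∈ Finset.range (l + 1), u ^ k) * w ^ l := by
        induction (d - 1) with
        | zero => simp
        | succ m ih =>
          rw [Finset.sum_range_succ, Finset.sum_range_succ (fun l => (∑ k ∈ Finset.range (l+1), u^k) * w ^ l),
            mul_add, ← ih, Finset.sum_range_succ (fun k => u ^ k)]
          ring
    _ = (1 - w) * ∑ l ∈ Finset.range (d - 1), ∑ k ∈ Finset.range (l + 1),
          u ^ k * w ^ l := by
        simp [Finset.sum_mul]
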